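/- Let k be a commutative ring, A a Z-graded k-algebra, d ≥ 1 an integer, f₁,…,fₙ ∈ A homogeneous elements of degree d, and let h : k[T₁,…,Tₙ] → A be the k-algebra morphism sending each Tᵢ to fᵢ. Let I = (f₁,…,fₙ) ⊆ A. Then the kernel of the composite k-algebra morphism k[T₁,…,Tₙ] → A → A/H⁰_I(A) equals the ideal of inertia forms TF_{(T₁,…,Tₙ)}(ker h) of ker h with respect to the ideal (T₁,…,Tₙ) of k[T₁,…,Tₙ]. -/

import Mathlib

/-- The ideal of inertia forms (Trägheitsformen) of `I` with respect to `J`: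
`TF_J(I) = ⋃ₙ (I :_R Jⁿ) = {a ∈ R | ∃ N, J^N · a ⊆ I}`. -/
noncomputable def inertiaForms {R : Type*} [CommRing R] (J I : Ideal R) : Ideal R :=
  ⨆ n : ℕ, I.colon ((J ^ n : Ideal R) : Set R)

lemma mem_inertiaForms {R : Type*} [CommRing R] {J I : Ideal R} {a : R} :
    a ∈ inertiaForms J I ↔ ∃ N : ℕ, ∀ x ∈ J ^ N, x * a ∈ I := by
  rw [inertiaForms, Submodule.mem_iSup_of_directed]
  · constructor
    · rintro ⟨N, hN⟩
      exact ⟨N, fun x hx => by simpa [mul_comm] using Submodule.mem_colon.mp hN x hx⟩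
    · rintro ⟨N, hN⟩
      exact ⟨N, Submodule.mem_colon.mpr fun x hx => by simpa [mul_comm] using hN x hx⟩
  · intro m l
    refine ⟨max m l, Submodule.colon_mono le_rfl (Ideal.pow_le_pow_right (le_max_left m l)),
      Submodule.colon_mono le_rfl (Ideal.pow_le_pow_right (le_max_right m l))⟩

/-- for `h : k[T₁,…,Tₙ] → A`, `Tᵢ ↦ fᵢ` with the `fᵢ` homogeneous of degree
`d ≥ 1` in a `ℤ`-graded `k`-algebra `A` and `I = (f₁,…,fₙ)`, the kernel of the composite
`k[T₁,…,Tₙ] → A → A/H⁰_I(A)` equals `TF_{(T₁,…,Tₙ)}(ker h)`.  Note that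
`H⁰_I(A) = {a | ∃ N, Iᴺ·a = 0} = inertiaForms I ⊥`. -/
theorem statement0 {k A : Type*} [CommRing k] [CommRing A] [Algebra k A]
    (𝒜 : ℤ → Submodule k A) [GradedAlgebra 𝒜]
    (n : ℕ) (d : ℤ) (hd : 1 ≤ d) (f : Fin n → A) (hf : ∀ i, f i ∈ 𝒜 d)
    (I : Ideal A) (hI : I = Ideal.span (Set.range f)) :
    RingHom.ker ((Ideal.Quotient.mkₐ k (inertiaForms I ⊥)).comp
        (MvPolynomial.aeval f : MvPolynomial (Fin n) k →ₐ[k] A))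
      = inertiaForms
          (Ideal.span (Set.range (MvPolynomial.X : Fin n → MvPolynomial (Fin n) k)))
          (RingHom.ker (MvPolynomial.aeval f : MvPolynomial (Fin n) k →ₐ[k] A)) := by
  set h := (MvPolynomial.aeval f : MvPolynomial (Fin n) k →ₐ[k] A) with hh
  set J := Ideal.span (Set.range (MvPolynomial.X : Fin n → MvPolynomial (Fin n) k)) with hJ
  have hmap : ∀ N : ℕ, Ideal.map h (J ^ N) = I ^ N := by
    intro N
    rw [Ideal.map_pow, hJ, Ideal.map_span, hI, ← Set.range_comp]
    congr 2
    ext i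
    simp [hh]
  ext p
  simp only [RingHom.mem_ker, AlgHom.coe_comp, Function.comp_apply,
    Ideal.Quotient.mkₐ_eq_mk, Ideal.Quotient.eq_zero_iff_mem, mem_inertiaForms]
  constructor
  · rintro ⟨N, hN⟩
    refine ⟨N, fun q hq => ?_⟩
    have : h q ∈ Ideal.map h (J ^ N) := Ideal.mem_map_of_mem _ hq
    rw [hmap N] at this
    have := hN _ this
    simpa [RingHom.mem_ker, map_mul] using this
  · rintro ⟨N, hN⟩
    refine ⟨N, fun x hx => ?_⟩
    rw [← hmap N] at hx
    have hle : Ideal.map h (J ^ N) ≤ (⊥ : Ideal A).colon (Ideal.span {h p}) := by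
      rw [Ideal.map_le_iff_le_comap]
      intro q hq
      simp only [Ideal.mem_comap, Ideal.mem_colon_span_singleton, Ideal.mem_bot]
      have := hN q hq
      simpa [RingHom.mem_ker, map_mul] using this
    have := hle hx
    rw [Ideal.mem_colon_span_singleton, Ideal.mem_bot] at this
    simpa using this
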